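/- For any probability measure μ on ℝ × {0,1} (the law of observables (Y,D)) and any Borel probability measure ν on ℝ² (the law of (Y0,Y1)): ν is the law of a pair (Y0,Y1) on a probability space carrying (Y,D) with law μ such that Y = Y1·D + Y0·(1−D), Y1 > Y0 ⇒ D=1, Y0 > Y1 ⇒ D=0, if and only if for every Borel set A ⊆ ℝ², μ({(y,0): y ∈ L_{A,0}}) + μ({(y,1): y ∈ L_{A,1}}) ≤ ν(A) ≤ μ({(y,0): y ∈ U_{A,0}}) + μ({(y,1): y ∈ U_{A,1}}), where U_{A,1} = {y : ((−∞,y] × {y}) ∩ A ≠ ∅}, U_{A,0} = {y : ({y} × (−∞,y]) ∩ A ≠ ∅}, L_{A,1} = {y : (−∞,y] × {y} ⊆ A}, L_{A,0} = {y : {y} × (−∞,y] ⊆ A}. -/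

import Mathlib

open MeasureTheory Set
open scoped ENNReal NNReal

namespace RoyAux


/-- First-coordinate law of the `D = false` part of `μ`. -/
noncomputable def mF (μ : Measure (ℝ × Bool)) : Measure ℝ :=
  (μ.restrict {q : ℝ × Bool | q.2 = false}).map Prod.fst

/-- First-coordinate law of the `D = true` part of `μ`. -/
noncomputable def mT (μ : Measure (ℝ × Bool)) : Measure ℝ :=
  (μ.restrict {q : ℝ × Bool | q.2 = true}).map Prod.fst

lemma meas_sF : MeasurableSet {q : ℝ × Bool | q.2 = false} :=
  measurable_snd (measurableSet_singleton false)

lemma meas_sT : MeasurableSet {q : ℝ × Bool | q.2 = true} :=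
  measurable_snd (measurableSet_singleton true)

lemma prod_false_eq (B : Set ℝ) :
    Prod.fst ⁻¹' B ∩ {q : ℝ × Bool | q.2 = false} = B ×ˢ ({false} : Set Bool) := by
  ext ⟨y, d⟩; simp [Set.mem_prod, and_comm]

lemma prod_true_eq (B : Set ℝ) :
    Prod.fst ⁻¹' B ∩ {q : ℝ × Bool | q.2 = true} = B ×ˢ ({true} : Set Bool) := by
  ext ⟨y, d⟩; simp [Set.mem_prod, and_comm]

lemma mF_apply (μ : Measure (ℝ × Bool)) {B : Set ℝ} (hB : MeasurableSet B) :
    mF μ B = μ (B ×ˢ ({false} : Set Bool)) := by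
  rw [mF, Measure.map_apply measurable_fst hB, Measure.restrict_apply' meas_sF, prod_false_eq]

lemma mT_apply (μ : Measure (ℝ × Bool)) {B : Set ℝ} (hB : MeasurableSet B) :
    mT μ B = μ (B ×ˢ ({true} : Set Bool)) := by
  rw [mT, Measure.map_apply measurable_fst hB, Measure.restrict_apply' meas_sT, prod_true_eq]

lemma mF_outer (μ : Measure (ℝ × Bool)) (S : Set ℝ) :
    μ (S ×ˢ ({false} : Set Bool)) = mF μ S := by
  apply le_antisymm
  · calc μ (S ×ˢ ({false} : Set Bool))
        ≤ μ (toMeasurable (mF μ) S ×ˢ ({false} : Set Bool)) :=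
          measure_mono (Set.prod_mono (subset_toMeasurable _ _) subset_rfl)
    _ = mF μ (toMeasurable (mF μ) S) := (mF_apply μ (measurableSet_toMeasurable _ _)).symm
    _ = mF μ S := measure_toMeasurable _
  · set W := toMeasurable μ (S ×ˢ ({false} : Set Bool)) with hW
    have hWm : MeasurableSet W := measurableSet_toMeasurable _ _
    have hT : MeasurableSet {y : ℝ | (y, false) ∈ W} :=
      hWm.preimage (measurable_id.prodMk measurable_const)
    calc mF μ S ≤ mF μ {y | (y, false) ∈ W} := by
          refine measure_mono fun y hy => ?_
          exact subset_toMeasurable _ _ (Set.mk_mem_prod hy rfl)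
    _ = μ ({y | (y, false) ∈ W} ×ˢ ({false} : Set Bool)) := mF_apply μ hT
    _ ≤ μ W := by
          refine measure_mono ?_
          rintro ⟨y, d⟩ ⟨h1, h2⟩
          simp only [mem_singleton_iff] at h2
          subst h2; exact h1
    _ = μ (S ×ˢ ({false} : Set Bool)) := measure_toMeasurable _

lemma mT_outer (μ : Measure (ℝ × Bool)) (S : Set ℝ) :
    μ (S ×ˢ ({true} : Set Bool)) = mT μ S := by
  apply le_antisymm
  · calc μ (S ×ˢ ({true} : Set Bool))
        ≤ μ (toMeasurable (mT μ) S ×ˢ ({true} : Set Bool)) :=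
          measure_mono (Set.prod_mono (subset_toMeasurable _ _) subset_rfl)
    _ = mT μ (toMeasurable (mT μ) S) := (mT_apply μ (measurableSet_toMeasurable _ _)).symm
    _ = mT μ S := measure_toMeasurable _
  · set W := toMeasurable μ (S ×ˢ ({true} : Set Bool)) with hW
    have hWm : MeasurableSet W := measurableSet_toMeasurable _ _
    have hT : MeasurableSet {y : ℝ | (y, true) ∈ W} :=
      hWm.preimage (measurable_id.prodMk measurable_const)
    calc mT μ S ≤ mT μ {y | (y, true) ∈ W} := by
          refine measure_mono fun y hy => ?_
          exact subset_toMeasurable _ _ (Set.mk_mem_prod hy rfl)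
    _ = μ ({y | (y, true) ∈ W} ×ˢ ({true} : Set Bool)) := mT_apply μ hT
    _ ≤ μ W := by
          refine measure_mono ?_
          rintro ⟨y, d⟩ ⟨h1, h2⟩
          simp only [mem_singleton_iff] at h2
          subst h2; exact h1
    _ = μ (S ×ˢ ({true} : Set Bool)) := measure_toMeasurable _



variable {μ : Measure (ℝ × Bool)} [IsProbabilityMeasure μ]
  {ν ν0 ν1 : Measure (ℝ × ℝ)}

omit [IsProbabilityMeasure μ] in
lemma upper_bound_piece (h0 : ν0 {p : ℝ × ℝ | p.1 < p.2} = 0)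
    (hm0 : ν0.map Prod.fst = mF μ) {A : Set (ℝ × ℝ)} :
    ν0 A ≤ mF μ {y : ℝ | ∃ x ≤ y, (y, x) ∈ A} := by
  set U := {y : ℝ | ∃ x ≤ y, (y, x) ∈ A} with hU
  set T := toMeasurable (mF μ) U with hT
  have hTm : MeasurableSet T := measurableSet_toMeasurable _ _
  have hsub : A ⊆ Prod.fst ⁻¹' T ∪ {p : ℝ × ℝ | p.1 < p.2} := by
    intro p hp
    rcases le_or_gt p.2 p.1 with h | h
    · exact Or.inl (subset_toMeasurable _ _ ⟨p.2, h, by simpa using hp⟩)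
    · exact Or.inr h
  calc ν0 A ≤ ν0 (Prod.fst ⁻¹' T ∪ {p : ℝ × ℝ | p.1 < p.2}) := measure_mono hsub
    _ ≤ ν0 (Prod.fst ⁻¹' T) + ν0 {p : ℝ × ℝ | p.1 < p.2} := measure_union_le _ _
    _ = (ν0.map Prod.fst) T := by
        rw [h0, add_zero, Measure.map_apply measurable_fst hTm]
    _ = mF μ T := by rw [hm0]
    _ = mF μ U := measure_toMeasurable _

omit [IsProbabilityMeasure μ] in
lemma lower_bound_piece [IsFiniteMeasure ν0] (h0 : ν0 {p : ℝ × ℝ | p.1 < p.2} = 0)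
    (hm0 : ν0.map Prod.fst = mF μ) {A : Set (ℝ × ℝ)} (hA : MeasurableSet A) :
    mF μ {y : ℝ | ∀ x ≤ y, (y, x) ∈ A} ≤ ν0 A := by
  set L := {y : ℝ | ∀ x ≤ y, (y, x) ∈ A} with hL
  refine ENNReal.le_of_forall_pos_le_add fun ε hε _ => ?_
  set W := Aᶜ ∩ {p : ℝ × ℝ | p.2 ≤ p.1} with hWdef
  have hWm : MeasurableSet W := hA.compl.inter (measurableSet_le measurable_snd measurable_fst)
  obtain ⟨K, hKW, hKc, hK⟩ := hWm.exists_isCompact_lt_add (measure_ne_top ν0 W)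
    (ε := (ε : ℝ≥0∞)) (by exact_mod_cast hε.ne')
  set F := Prod.fst '' K with hF
  have hFm : MeasurableSet F := (hKc.image continuous_fst).isClosed.measurableSet
  have hLF : L ⊆ Fᶜ := by
    intro y hy
    rintro ⟨p, hpK, rfl⟩
    obtain ⟨hpA, hple⟩ := hKW hpK
    exact hpA (by simpa using hy p.2 hple)
  have e1 : ν0 K ≤ mF μ F := by
    rw [← hm0, Measure.map_apply measurable_fst hFm]
    exact measure_mono (subset_preimage_image _ _)
  have e2 : mF μ univ = ν0 univ := by
    rw [← hm0, Measure.map_apply measurable_fst MeasurableSet.univ, preimage_univ]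
  have hWc : ν0 Wᶜ ≤ ν0 A := by
    have hsub : Wᶜ ⊆ A ∪ {p : ℝ × ℝ | p.1 < p.2} := by
      intro p hp
      simp only [hWdef, compl_inter, mem_union, mem_compl_iff, mem_setOf_eq, not_le,
        compl_compl] at hp ⊢
      tauto
    calc ν0 Wᶜ ≤ ν0 (A ∪ {p : ℝ × ℝ | p.1 < p.2}) := measure_mono hsub
      _ ≤ ν0 A + ν0 {p : ℝ × ℝ | p.1 < p.2} := measure_union_le _ _
      _ = ν0 A := by rw [h0, add_zero]
  have hFne : mF μ F ≠ ∞ := by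
    have h := (measure_mono (subset_univ F)).trans_eq e2
    exact (h.trans_lt (measure_lt_top _ _)).ne
  calc mF μ L ≤ mF μ Fᶜ := measure_mono hLF
    _ = mF μ univ - mF μ F := measure_compl hFm hFne
    _ ≤ ν0 univ - ν0 K := by rw [e2]; exact tsub_le_tsub le_rfl e1
    _ ≤ ν0 A + ε := by
        rw [tsub_le_iff_right]
        calc ν0 univ = ν0 W + ν0 Wᶜ := (measure_add_measure_compl hWm).symm
          _ ≤ (ν0 K + ε) + ν0 A := add_le_add hK.le hWc
          _ = ν0 A + ε + ν0 K := by ring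



variable {μ : Measure (ℝ × Bool)} [IsProbabilityMeasure μ]
  {ν ν0 ν1 : Measure (ℝ × ℝ)}

omit [IsProbabilityMeasure μ] in
lemma upper_bound_piece1 (h1 : ν1 {p : ℝ × ℝ | p.2 < p.1} = 0)
    (hm1 : ν1.map Prod.snd = mT μ) {A : Set (ℝ × ℝ)} :
    ν1 A ≤ mT μ {y : ℝ | ∃ x ≤ y, (x, y) ∈ A} := by
  set U := {y : ℝ | ∃ x ≤ y, (x, y) ∈ A} with hU
  set T := toMeasurable (mT μ) U with hT
  have hTm : MeasurableSet T := measurableSet_toMeasurable _ _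
  have hsub : A ⊆ Prod.snd ⁻¹' T ∪ {p : ℝ × ℝ | p.2 < p.1} := by
    intro p hp
    rcases le_or_gt p.1 p.2 with h | h
    · exact Or.inl (subset_toMeasurable _ _ ⟨p.1, h, by simpa using hp⟩)
    · exact Or.inr h
  calc ν1 A ≤ ν1 (Prod.snd ⁻¹' T ∪ {p : ℝ × ℝ | p.2 < p.1}) := measure_mono hsub
    _ ≤ ν1 (Prod.snd ⁻¹' T) + ν1 {p : ℝ × ℝ | p.2 < p.1} := measure_union_le _ _
    _ = (ν1.map Prod.snd) T := by
        rw [h1, add_zero, Measure.map_apply measurable_snd hTm]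
    _ = mT μ T := by rw [hm1]
    _ = mT μ U := measure_toMeasurable _

omit [IsProbabilityMeasure μ] in
lemma lower_bound_piece1 [IsFiniteMeasure ν1] (h1 : ν1 {p : ℝ × ℝ | p.2 < p.1} = 0)
    (hm1 : ν1.map Prod.snd = mT μ) {A : Set (ℝ × ℝ)} (hA : MeasurableSet A) :
    mT μ {y : ℝ | ∀ x ≤ y, (x, y) ∈ A} ≤ ν1 A := by
  set L := {y : ℝ | ∀ x ≤ y, (x, y) ∈ A} with hL
  refine ENNReal.le_of_forall_pos_le_add fun ε hε _ => ?_
  set W := Aᶜ ∩ {p : ℝ × ℝ | p.1 ≤ p.2} with hWdef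
  have hWm : MeasurableSet W := hA.compl.inter (measurableSet_le measurable_fst measurable_snd)
  obtain ⟨K, hKW, hKc, hK⟩ := hWm.exists_isCompact_lt_add (measure_ne_top ν1 W)
    (ε := (ε : ℝ≥0∞)) (by exact_mod_cast hε.ne')
  set F := Prod.snd '' K with hF
  have hFm : MeasurableSet F := (hKc.image continuous_snd).isClosed.measurableSet
  have hLF : L ⊆ Fᶜ := by
    intro y hy
    rintro ⟨p, hpK, rfl⟩
    obtain ⟨hpA, hple⟩ := hKW hpK
    exact hpA (by simpa using hy p.1 hple)
  have e1 : ν1 K ≤ mT μ F := by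
    rw [← hm1, Measure.map_apply measurable_snd hFm]
    exact measure_mono (subset_preimage_image _ _)
  have e2 : mT μ univ = ν1 univ := by
    rw [← hm1, Measure.map_apply measurable_snd MeasurableSet.univ, preimage_univ]
  have hWc : ν1 Wᶜ ≤ ν1 A := by
    have hsub : Wᶜ ⊆ A ∪ {p : ℝ × ℝ | p.2 < p.1} := by
      intro p hp
      simp only [hWdef, compl_inter, mem_union, mem_compl_iff, mem_setOf_eq, not_le,
        compl_compl] at hp ⊢
      tauto
    calc ν1 Wᶜ ≤ ν1 (A ∪ {p : ℝ × ℝ | p.2 < p.1}) := measure_mono hsub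
      _ ≤ ν1 A + ν1 {p : ℝ × ℝ | p.2 < p.1} := measure_union_le _ _
      _ = ν1 A := by rw [h1, add_zero]
  have hFne : mT μ F ≠ ∞ := by
    have h := (measure_mono (subset_univ F)).trans_eq e2
    exact (h.trans_lt (measure_lt_top _ _)).ne
  calc mT μ L ≤ mT μ Fᶜ := measure_mono hLF
    _ = mT μ univ - mT μ F := measure_compl hFm hFne
    _ ≤ ν1 univ - ν1 K := by rw [e2]; exact tsub_le_tsub le_rfl e1
    _ ≤ ν1 A + ε := by
        rw [tsub_le_iff_right]
        calc ν1 univ = ν1 W + ν1 Wᶜ := (measure_add_measure_compl hWm).symm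
          _ ≤ (ν1 K + ε) + ν1 A := add_le_add hK.le hWc
          _ = ν1 A + ε + ν1 K := by ring



/-- Reconstruction of `μ` from its two slices. -/
lemma mu_eq_slices (μ : Measure (ℝ × Bool)) :
    (mF μ).map (fun y => (y, false)) + (mT μ).map (fun y => (y, true)) = μ := by
  ext E hE
  have hmf : Measurable fun y : ℝ => (y, false) := measurable_id.prodMk measurable_const
  have hmt : Measurable fun y : ℝ => (y, true) := measurable_id.prodMk measurable_const
  have hEf : MeasurableSet ((fun y : ℝ => (y, false)) ⁻¹' E) := hmf hE
  have hEt : MeasurableSet ((fun y : ℝ => (y, true)) ⁻¹' E) := hmt hE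
  rw [Measure.add_apply, Measure.map_apply hmf hE, Measure.map_apply hmt hE,
    mF, mT, Measure.map_apply measurable_fst hEf, Measure.map_apply measurable_fst hEt,
    Measure.restrict_apply (measurable_fst hEf), Measure.restrict_apply (measurable_fst hEt)]
  have e1 : Prod.fst ⁻¹' ((fun y : ℝ => (y, false)) ⁻¹' E) ∩ {q : ℝ × Bool | q.2 = false}
      = E ∩ {q : ℝ × Bool | q.2 = false} := by
    ext ⟨y, d⟩
    simp only [mem_inter_iff, mem_preimage, mem_setOf_eq]
    constructor
    · rintro ⟨h1, h2⟩; subst h2; exact ⟨h1, rfl⟩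
    · rintro ⟨h1, h2⟩; subst h2; exact ⟨h1, rfl⟩
  have e2 : Prod.fst ⁻¹' ((fun y : ℝ => (y, true)) ⁻¹' E) ∩ {q : ℝ × Bool | q.2 = true}
      = E ∩ {q : ℝ × Bool | q.2 = true} := by
    ext ⟨y, d⟩
    simp only [mem_inter_iff, mem_preimage, mem_setOf_eq]
    constructor
    · rintro ⟨h1, h2⟩; subst h2; exact ⟨h1, rfl⟩
    · rintro ⟨h1, h2⟩; subst h2; exact ⟨h1, rfl⟩
  rw [e1, e2]
  have e3 : {q : ℝ × Bool | q.2 = true} = {q : ℝ × Bool | q.2 = false}ᶜ := by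
    ext ⟨y, d⟩; cases d <;> simp
  rw [e3, ← Set.diff_eq]
  exact measure_inter_add_diff E meas_sF



lemma mF_fin (μ : Measure (ℝ × Bool)) [IsFiniteMeasure μ] : IsFiniteMeasure (mF μ) := by
  constructor
  rw [mF, Measure.map_apply measurable_fst MeasurableSet.univ, preimage_univ]
  exact (measure_mono (subset_univ _)).trans_lt (measure_lt_top _ _)

lemma mT_fin (μ : Measure (ℝ × Bool)) [IsFiniteMeasure μ] : IsFiniteMeasure (mT μ) := by
  constructor
  rw [mT, Measure.map_apply measurable_fst MeasurableSet.univ, preimage_univ]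
  exact (measure_mono (subset_univ _)).trans_lt (measure_lt_top _ _)

lemma decomp_of_ineq (μ : Measure (ℝ × Bool)) [IsProbabilityMeasure μ]
    (ν : Measure (ℝ × ℝ)) [IsProbabilityMeasure ν]
    (h : ∀ A : Set (ℝ × ℝ), MeasurableSet A →
      μ ({y : ℝ | ∀ x ≤ y, (y, x) ∈ A} ×ˢ ({false} : Set Bool)) +
        μ ({y : ℝ | ∀ x ≤ y, (x, y) ∈ A} ×ˢ ({true} : Set Bool)) ≤ ν A ∧
      ν A ≤ μ ({y : ℝ | ∃ x ≤ y, (y, x) ∈ A} ×ˢ ({false} : Set Bool)) +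
        μ ({y : ℝ | ∃ x ≤ y, (x, y) ∈ A} ×ˢ ({true} : Set Bool))) :
    ∃ ν0 ν1 : Measure (ℝ × ℝ),
      ν = ν0 + ν1 ∧ ν0 {p : ℝ × ℝ | p.1 < p.2} = 0 ∧ ν1 {p : ℝ × ℝ | p.2 < p.1} = 0 ∧
      ν0.map Prod.fst = mF μ ∧ ν1.map Prod.snd = mT μ := by
  classical
  set s0 : Set (ℝ × ℝ) := {p | p.2 < p.1} with hs0def
  set s1 : Set (ℝ × ℝ) := {p | p.1 < p.2} with hs1def
  set dg : Set (ℝ × ℝ) := {p | p.1 = p.2} with hdgdef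
  have hs0 : MeasurableSet s0 := measurableSet_lt measurable_snd measurable_fst
  have hs1 : MeasurableSet s1 := measurableSet_lt measurable_fst measurable_snd
  have hdg : MeasurableSet dg := measurableSet_eq_fun measurable_fst measurable_snd
  set m0 : Measure ℝ := (ν.restrict s0).map Prod.fst with hm0def
  set m1 : Measure ℝ := (ν.restrict s1).map Prod.snd with hm1def
  set d : Measure ℝ := (ν.restrict dg).map Prod.fst with hddef
  haveI : IsFiniteMeasure m0 := by
    constructor
    rw [hm0def, Measure.map_apply measurable_fst MeasurableSet.univ, preimage_univ]
    exact (measure_mono (subset_univ _)).trans_lt (measure_lt_top _ _)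
  haveI : IsFiniteMeasure m1 := by
    constructor
    rw [hm1def, Measure.map_apply measurable_snd MeasurableSet.univ, preimage_univ]
    exact (measure_mono (subset_univ _)).trans_lt (measure_lt_top _ _)
  haveI : IsFiniteMeasure (mF μ) := mF_fin μ
  haveI : IsFiniteMeasure (mT μ) := mT_fin μ
  -- (i) m0 ≤ mF μ
  have hm0le : m0 ≤ mF μ := by
    rw [Measure.le_iff]
    intro B hB
    have hAm : MeasurableSet (Prod.fst ⁻¹' B ∩ s0) := (measurable_fst hB).inter hs0
    have hup := (h _ hAm).2
    have hU0 : {y : ℝ | ∃ x ≤ y, (y, x) ∈ Prod.fst ⁻¹' B ∩ s0} = B := by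
      ext y
      constructor
      · rintro ⟨x, hx, hyB, _⟩; exact hyB
      · intro hy; exact ⟨y - 1, by linarith, hy, by simp [hs0def]⟩
    have hU1 : {y : ℝ | ∃ x ≤ y, (x, y) ∈ Prod.fst ⁻¹' B ∩ s0} = ∅ := by
      ext y
      simp only [mem_setOf_eq, mem_empty_iff_false, iff_false, not_exists]
      rintro x ⟨hxy, hxB, hlt⟩
      simp only [hs0def, mem_setOf_eq] at hlt
      exact absurd hxy (not_le.mpr hlt)
    rw [hU0, hU1, Set.empty_prod, measure_empty, add_zero] at hup
    rw [hm0def, Measure.map_apply measurable_fst hB, Measure.restrict_apply (measurable_fst hB),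
      mF_apply μ hB]
    exact hup
  -- (ii) m1 ≤ mT μ
  have hm1le : m1 ≤ mT μ := by
    rw [Measure.le_iff]
    intro B hB
    have hAm : MeasurableSet (Prod.snd ⁻¹' B ∩ s1) := (measurable_snd hB).inter hs1
    have hup := (h _ hAm).2
    have hU1 : {y : ℝ | ∃ x ≤ y, (x, y) ∈ Prod.snd ⁻¹' B ∩ s1} = B := by
      ext y
      constructor
      · rintro ⟨x, hx, hyB, _⟩; exact hyB
      · intro hy; exact ⟨y - 1, by linarith, hy, by simp [hs1def]⟩
    have hU0 : {y : ℝ | ∃ x ≤ y, (y, x) ∈ Prod.snd ⁻¹' B ∩ s1} = ∅ := by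
      ext y
      simp only [mem_setOf_eq, mem_empty_iff_false, iff_false, not_exists]
      rintro x ⟨hxy, hxB, hlt⟩
      simp only [hs1def, mem_setOf_eq] at hlt
      exact absurd hxy (not_le.mpr hlt)
    rw [hU0, hU1, Set.empty_prod, measure_empty, zero_add] at hup
    rw [hm1def, Measure.map_apply measurable_snd hB, Measure.restrict_apply (measurable_snd hB),
      mT_apply μ hB]
    exact hup
  -- (iii) key equality
  have key : ∀ B : Set ℝ, MeasurableSet B → mF μ B + mT μ B = m0 B + m1 B + d B := by
    intro B hB
    set A : Set (ℝ × ℝ) :=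
      (Prod.fst ⁻¹' B ∩ {p : ℝ × ℝ | p.2 ≤ p.1}) ∪ (Prod.snd ⁻¹' B ∩ {p : ℝ × ℝ | p.1 ≤ p.2})
      with hAdef
    have hAm : MeasurableSet A :=
      ((measurable_fst hB).inter (measurableSet_le measurable_snd measurable_fst)).union
        ((measurable_snd hB).inter (measurableSet_le measurable_fst measurable_snd))
    have hL0 : {y : ℝ | ∀ x ≤ y, (y, x) ∈ A} = B := by
      ext y
      constructor
      · intro hy
        rcases hy (y - 1) (by linarith) with ⟨hyB, _⟩ | ⟨hB', hle⟩
        · exact hyB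
        · simp only [mem_setOf_eq] at hle; linarith
      · intro hy x hx
        exact Or.inl ⟨hy, hx⟩
    have hL1 : {y : ℝ | ∀ x ≤ y, (x, y) ∈ A} = B := by
      ext y
      constructor
      · intro hy
        rcases hy (y - 1) (by linarith) with ⟨hB', hle⟩ | ⟨hyB, _⟩
        · simp only [mem_setOf_eq] at hle; linarith
        · exact hyB
      · intro hy x hx
        exact Or.inr ⟨hy, hx⟩
    have hU0 : {y : ℝ | ∃ x ≤ y, (y, x) ∈ A} = B := by
      ext y
      constructor
      · rintro ⟨x, hx, ⟨hyB, _⟩ | ⟨hxB, hle⟩⟩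
        · exact hyB
        · simp only [mem_setOf_eq] at hle
          have : x = y := le_antisymm hx hle
          rwa [← this]
      · intro hy; exact ⟨y, le_rfl, Or.inl ⟨hy, le_refl y⟩⟩
    have hU1 : {y : ℝ | ∃ x ≤ y, (x, y) ∈ A} = B := by
      ext y
      constructor
      · rintro ⟨x, hx, ⟨hxB, hle⟩ | ⟨hyB, _⟩⟩
        · simp only [mem_setOf_eq] at hle
          have : x = y := le_antisymm hx hle
          rwa [← this]
        · exact hyB
      · intro hy; exact ⟨y, le_rfl, Or.inr ⟨hy, le_refl y⟩⟩
    have hlow := (h A hAm).1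
    have hup := (h A hAm).2
    rw [hL0, hL1] at hlow
    rw [hU0, hU1] at hup
    have hνA : ν A = μ (B ×ˢ ({false} : Set Bool)) + μ (B ×ˢ ({true} : Set Bool)) :=
      le_antisymm hup hlow
    -- decompose ν A into the three pieces
    have hA0 : A ∩ s0 = Prod.fst ⁻¹' B ∩ s0 := by
      ext p
      simp only [hAdef, hs0def, mem_inter_iff, mem_union, mem_setOf_eq, mem_preimage]
      constructor
      · rintro ⟨⟨h1, _⟩ | ⟨h1, hle⟩, hlt⟩
        · exact ⟨h1, hlt⟩
        · exact absurd hle (not_le.mpr hlt)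
      · rintro ⟨h1, hlt⟩
        exact ⟨Or.inl ⟨h1, hlt.le⟩, hlt⟩
    have hA1 : A ∩ s1 = Prod.snd ⁻¹' B ∩ s1 := by
      ext p
      simp only [hAdef, hs1def, mem_inter_iff, mem_union, mem_setOf_eq, mem_preimage]
      constructor
      · rintro ⟨⟨h1, hle⟩ | ⟨h1, _⟩, hlt⟩
        · exact absurd hle (not_le.mpr hlt)
        · exact ⟨h1, hlt⟩
      · rintro ⟨h1, hlt⟩
        exact ⟨Or.inr ⟨h1, hlt.le⟩, hlt⟩
    have hAd : A ∩ dg = Prod.fst ⁻¹' B ∩ dg := by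
      ext p
      simp only [hAdef, hdgdef, mem_inter_iff, mem_union, mem_setOf_eq, mem_preimage]
      constructor
      · rintro ⟨⟨h1, _⟩ | ⟨h1, _⟩, heq⟩
        · exact ⟨h1, heq⟩
        · exact ⟨heq ▸ h1, heq⟩
      · rintro ⟨h1, heq⟩
        exact ⟨Or.inl ⟨h1, heq.ge⟩, heq⟩
    have hdisj01 : Disjoint s0 s1 := by
      rw [Set.disjoint_left]
      intro p hp hp'
      exact absurd hp' (by simp only [hs0def, hs1def, mem_setOf_eq] at hp ⊢; exact not_lt.mpr hp.le)
    have hdisj0d : Disjoint s0 dg := by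
      rw [Set.disjoint_left]
      intro p hp hp'
      simp only [hs0def, mem_setOf_eq] at hp
      simp only [hdgdef, mem_setOf_eq] at hp'
      exact absurd hp' (by linarith)
    have hdisj1d : Disjoint s1 dg := by
      rw [Set.disjoint_left]
      intro p hp hp'
      simp only [hs1def, mem_setOf_eq] at hp
      simp only [hdgdef, mem_setOf_eq] at hp'
      exact absurd hp' (by linarith)
    have hcover : A = (A ∩ s0) ∪ (A ∩ s1) ∪ (A ∩ dg) := by
      rw [← Set.inter_union_distrib_left, ← Set.inter_union_distrib_left]
      refine (Set.inter_eq_left.mpr ?_).symm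
      intro p _
      rcases lt_trichotomy p.1 p.2 with hlt | heq | hgt
      · exact Or.inl (Or.inr hlt)
      · exact Or.inr heq
      · exact Or.inl (Or.inl hgt)
    have hνA' : ν A = ν (A ∩ s0) + ν (A ∩ s1) + ν (A ∩ dg) := by
      conv_lhs => rw [hcover]
      rw [measure_union ?_ (hAm.inter hdg), measure_union ?_ (hAm.inter hs1)]
      · exact (hdisj01.mono inter_subset_right inter_subset_right)
      · refine Disjoint.union_left ?_ ?_
        · exact hdisj0d.mono inter_subset_right inter_subset_right
        · exact hdisj1d.mono inter_subset_right inter_subset_right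
    have e0 : ν (A ∩ s0) = m0 B := by
      rw [hA0, hm0def, Measure.map_apply measurable_fst hB,
        Measure.restrict_apply (measurable_fst hB)]
    have e1 : ν (A ∩ s1) = m1 B := by
      rw [hA1, hm1def, Measure.map_apply measurable_snd hB,
        Measure.restrict_apply (measurable_snd hB)]
    have ed : ν (A ∩ dg) = d B := by
      rw [hAd, hddef, Measure.map_apply measurable_fst hB,
        Measure.restrict_apply (measurable_fst hB)]
    rw [mF_apply μ hB, mT_apply μ hB, ← hνA, hνA', e0, e1, ed]
  -- subtraction measures
  set ρ0 : Measure ℝ := mF μ - m0 with hρ0def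
  set ρ1 : Measure ℝ := mT μ - m1 with hρ1def
  have hc0 : ρ0 + m0 = mF μ := Measure.sub_add_cancel_of_le hm0le
  have hc1 : ρ1 + m1 = mT μ := Measure.sub_add_cancel_of_le hm1le
  have hρd : ρ0 + ρ1 = d := by
    ext B hB
    have h3 := key B hB
    have e0 : ρ0 B + m0 B = mF μ B := by rw [← Measure.add_apply, hc0]
    have e1 : ρ1 B + m1 B = mT μ B := by rw [← Measure.add_apply, hc1]
    have hfin : m0 B + m1 B ≠ ∞ :=
      (ENNReal.add_lt_top.mpr ⟨measure_lt_top _ _, measure_lt_top _ _⟩).ne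
    have hmain : (m0 B + m1 B) + (ρ0 B + ρ1 B) = (m0 B + m1 B) + d B := by
      calc (m0 B + m1 B) + (ρ0 B + ρ1 B) = (ρ0 B + m0 B) + (ρ1 B + m1 B) := by ring
        _ = mF μ B + mT μ B := by rw [e0, e1]
        _ = m0 B + m1 B + d B := h3
        _ = (m0 B + m1 B) + d B := by ring
    have := (ENNReal.add_right_inj hfin).mp hmain
    rw [Measure.add_apply]
    exact this
  set dgm : ℝ → ℝ × ℝ := fun x => (x, x) with hdgmdef
  have hdgm : Measurable dgm := measurable_id.prodMk measurable_id
  have hddg : d.map dgm = ν.restrict dg := by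
    ext E hE
    rw [Measure.map_apply hdgm hE, hddef, Measure.map_apply measurable_fst (hdgm hE),
      Measure.restrict_apply (measurable_fst (hdgm hE)), Measure.restrict_apply hE]
    congr 1
    ext ⟨a, b⟩
    simp only [mem_inter_iff, mem_preimage, hdgdef, mem_setOf_eq, hdgmdef]
    constructor <;> (rintro ⟨h1, h2⟩; subst h2; exact ⟨h1, rfl⟩)
  refine ⟨ν.restrict s0 + ρ0.map dgm, ν.restrict s1 + ρ1.map dgm, ?_, ?_, ?_, ?_, ?_⟩
  · -- ν = sum
    have hcov : s0 ∪ (s1 ∪ dg) = univ := by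
      ext p
      simp only [mem_union, mem_univ, iff_true, hs0def, hs1def, hdgdef, mem_setOf_eq]
      rcases lt_trichotomy p.1 p.2 with hlt | heq | hgt
      · exact Or.inr (Or.inl hlt)
      · exact Or.inr (Or.inr heq)
      · exact Or.inl hgt
    have hdisj1d : Disjoint s1 dg := by
      rw [Set.disjoint_left]
      intro p hp hp'
      simp only [hs1def, mem_setOf_eq] at hp
      simp only [hdgdef, mem_setOf_eq] at hp'
      exact absurd hp' (by linarith)
    have hdisj0 : Disjoint s0 (s1 ∪ dg) := by
      rw [Set.disjoint_left]
      intro p hp hp'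
      simp only [hs0def, mem_setOf_eq] at hp
      rcases hp' with hp' | hp' <;>
        simp only [hs1def, hdgdef, mem_setOf_eq] at hp' <;> linarith
    calc ν = ν.restrict univ := (Measure.restrict_univ).symm
      _ = ν.restrict s0 + (ν.restrict s1 + ν.restrict dg) := by
          rw [← hcov, Measure.restrict_union hdisj0 (hs1.union hdg),
            Measure.restrict_union hdisj1d hdg]
      _ = ν.restrict s0 + ρ0.map dgm + (ν.restrict s1 + ρ1.map dgm) := by
          rw [← hddg, ← hρd, Measure.map_add _ _ hdgm]
          abel
  · -- null on s1
    rw [Measure.add_apply, Measure.restrict_apply hs1, Measure.map_apply hdgm hs1]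
    have h1 : s1 ∩ s0 = ∅ := by
      ext p
      simp only [mem_inter_iff, hs0def, hs1def, mem_setOf_eq, mem_empty_iff_false, iff_false,
        not_and]
      intro hp
      exact not_lt.mpr hp.le
    have h2 : dgm ⁻¹' s1 = ∅ := by
      ext x
      simp [hdgmdef, hs1def]
    rw [h1, h2, measure_empty, measure_empty, add_zero]
  · -- null on s0
    rw [Measure.add_apply, Measure.restrict_apply hs0, Measure.map_apply hdgm hs0]
    have h1 : s0 ∩ s1 = ∅ := by
      ext p
      simp only [mem_inter_iff, hs0def, hs1def, mem_setOf_eq, mem_empty_iff_false, iff_false,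
        not_and]
      intro hp
      exact not_lt.mpr hp.le
    have h2 : dgm ⁻¹' s0 = ∅ := by
      ext x
      simp [hdgmdef, hs0def]
    rw [h1, h2, measure_empty, measure_empty, add_zero]
  · -- fst marginal
    rw [Measure.map_add _ _ measurable_fst, Measure.map_map measurable_fst hdgm]
    have : Prod.fst ∘ dgm = id := rfl
    rw [this, Measure.map_id, ← hm0def, add_comm, hc0]
  · -- snd marginal
    rw [Measure.map_add _ _ measurable_snd, Measure.map_map measurable_snd hdgm]
    have : Prod.snd ∘ dgm = id := rfl
    rw [this, Measure.map_id, ← hm1def, add_comm, hc1]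



/-- From a coupling, extract the decomposition. -/
lemma decomp_of_exists {Ω : Type} [MeasurableSpace Ω] (P : Measure Ω)
    (μ : Measure (ℝ × Bool)) (ν : Measure (ℝ × ℝ))
    (Y : Ω → ℝ) (D : Ω → Bool) (Y0 Y1 : Ω → ℝ)
    (hY : Measurable Y) (hD : Measurable D) (hY0 : Measurable Y0) (hY1 : Measurable Y1)
    (hmap1 : P.map (fun ω => (Y ω, D ω)) = μ)
    (hmap2 : P.map (fun ω => (Y0 ω, Y1 ω)) = ν)
    (hsel : ∀ ω, Y ω = if D ω then Y1 ω else Y0 ω)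
    (h10 : ∀ ω, Y1 ω > Y0 ω → D ω = true)
    (h01 : ∀ ω, Y0 ω > Y1 ω → D ω = false) :
    ∃ ν0 ν1 : Measure (ℝ × ℝ),
      ν = ν0 + ν1 ∧ ν0 {p : ℝ × ℝ | p.1 < p.2} = 0 ∧ ν1 {p : ℝ × ℝ | p.2 < p.1} = 0 ∧
      ν0.map Prod.fst = mF μ ∧ ν1.map Prod.snd = mT μ := by
  classical
  have hg : Measurable fun ω => (Y0 ω, Y1 ω) := hY0.prodMk hY1
  have hf : Measurable fun ω => (Y ω, D ω) := hY.prodMk hD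
  set F : Set Ω := D ⁻¹' {false} with hFdef
  set T : Set Ω := D ⁻¹' {true} with hTdef
  have hFm : MeasurableSet F := hD (measurableSet_singleton false)
  have hTm : MeasurableSet T := hD (measurableSet_singleton true)
  have hFT : F = Tᶜ := by
    ext ω
    simp [hFdef, hTdef]
  refine ⟨(P.restrict F).map (fun ω => (Y0 ω, Y1 ω)),
    (P.restrict T).map (fun ω => (Y0 ω, Y1 ω)), ?_, ?_, ?_, ?_, ?_⟩
  · rw [← hmap2, ← Measure.map_add _ _ hg]
    congr 1
    rw [hFT, add_comm]
    exact (Measure.restrict_add_restrict_compl hTm).symm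
  · rw [Measure.map_apply hg (measurableSet_lt measurable_fst measurable_snd),
      Measure.restrict_apply (hg (measurableSet_lt measurable_fst measurable_snd))]
    convert measure_empty
    · ext ω
      simp only [mem_inter_iff, mem_preimage, mem_setOf_eq, mem_empty_iff_false, iff_false,
        not_and, hFdef, mem_singleton_iff]
      intro hlt
      simp [h10 ω hlt]
    · infer_instance
  · rw [Measure.map_apply hg (measurableSet_lt measurable_snd measurable_fst),
      Measure.restrict_apply (hg (measurableSet_lt measurable_snd measurable_fst))]
    convert measure_empty
    · ext ω
      simp only [mem_inter_iff, mem_preimage, mem_setOf_eq, mem_empty_iff_false, iff_false,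
        not_and, hTdef, mem_singleton_iff]
      intro hlt
      simp [h01 ω hlt]
    · infer_instance
  · -- fst marginal equals mF μ
    rw [mF, ← hmap1, Measure.restrict_map hf meas_sF,
      Measure.map_map measurable_fst hf, Measure.map_map measurable_fst hg]
    have hpre : (fun ω => (Y ω, D ω)) ⁻¹' {q : ℝ × Bool | q.2 = false} = F := by
      ext ω; simp [hFdef]
    rw [hpre]
    refine Measure.map_congr ?_
    refine (ae_restrict_iff' hFm).mpr (Filter.Eventually.of_forall fun ω hω => ?_)
    have : D ω = false := by simpa [hFdef] using hω
    simp [Function.comp, hsel ω, this]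
  · rw [mT, ← hmap1, Measure.restrict_map hf meas_sT,
      Measure.map_map measurable_fst hf, Measure.map_map measurable_snd hg]
    have hpre : (fun ω => (Y ω, D ω)) ⁻¹' {q : ℝ × Bool | q.2 = true} = T := by
      ext ω; simp [hTdef]
    rw [hpre]
    refine Measure.map_congr ?_
    refine (ae_restrict_iff' hTm).mpr (Filter.Eventually.of_forall fun ω hω => ?_)
    have : D ω = true := by simpa [hTdef] using hω
    simp [Function.comp, hsel ω, this]

/-- From a decomposition, build the coupling. -/
lemma exists_of_decomp (μ : Measure (ℝ × Bool)) [IsProbabilityMeasure μ]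
    (ν : Measure (ℝ × ℝ)) [IsProbabilityMeasure ν] (ν0 ν1 : Measure (ℝ × ℝ))
    (hν : ν = ν0 + ν1) (h0 : ν0 {p : ℝ × ℝ | p.1 < p.2} = 0)
    (h1 : ν1 {p : ℝ × ℝ | p.2 < p.1} = 0)
    (hm0 : ν0.map Prod.fst = mF μ) (hm1 : ν1.map Prod.snd = mT μ) :
    ∃ (Ω : Type) (_ : MeasurableSpace Ω) (P : Measure Ω),
      IsProbabilityMeasure P ∧
      ∃ (Y : Ω → ℝ) (D : Ω → Bool) (Y0 Y1 : Ω → ℝ),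
        Measurable Y ∧ Measurable D ∧ Measurable Y0 ∧ Measurable Y1 ∧
        P.map (fun ω => (Y ω, D ω)) = μ ∧
        P.map (fun ω => (Y0 ω, Y1 ω)) = ν ∧
        (∀ ω, Y ω = if D ω then Y1 ω else Y0 ω) ∧
        (∀ ω, Y1 ω > Y0 ω → D ω = true) ∧
        (∀ ω, Y0 ω > Y1 ω → D ω = false) := by
  classical
  set S : Set ((ℝ × ℝ) × Bool) :=
    ({p : ℝ × ℝ | p.2 ≤ p.1} ×ˢ ({false} : Set Bool)) ∪
      ({p : ℝ × ℝ | p.1 ≤ p.2} ×ˢ ({true} : Set Bool)) with hSdef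
  have hS : MeasurableSet S :=
    ((measurableSet_le measurable_snd measurable_fst).prod (measurableSet_singleton false)).union
      ((measurableSet_le measurable_fst measurable_snd).prod (measurableSet_singleton true))
  have hjf : Measurable fun p : ℝ × ℝ => (p, false) := measurable_id.prodMk measurable_const
  have hjt : Measurable fun p : ℝ × ℝ => (p, true) := measurable_id.prodMk measurable_const
  set m : Measure ((ℝ × ℝ) × Bool) :=
    ν0.map (fun p => (p, false)) + ν1.map (fun p => (p, true)) with hmdef
  have hmS : m Sᶜ = 0 := by
    rw [hmdef, Measure.add_apply, Measure.map_apply hjf hS.compl,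
      Measure.map_apply hjt hS.compl]
    have e0 : (fun p : ℝ × ℝ => (p, false)) ⁻¹' Sᶜ = {p : ℝ × ℝ | p.1 < p.2} := by
      ext p
      simp [hSdef, not_le]
    have e1 : (fun p : ℝ × ℝ => (p, true)) ⁻¹' Sᶜ = {p : ℝ × ℝ | p.2 < p.1} := by
      ext p
      simp [hSdef, not_le]
    rw [e0, e1, h0, h1, add_zero]
  have hmem : ∀ᵐ q ∂m, q ∈ S := by
    rw [ae_iff]
    exact hmS
  set P : Measure ↥S := m.comap Subtype.val with hPdef
  have hmap_val : P.map (Subtype.val : ↥S → (ℝ × ℝ) × Bool) = m := by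
    rw [hPdef, _root_.map_comap_subtype_coe hS]
    exact Measure.restrict_eq_self_of_ae_mem hmem
  have hm_univ : m univ = 1 := by
    rw [hmdef, Measure.add_apply, Measure.map_apply hjf MeasurableSet.univ,
      Measure.map_apply hjt MeasurableSet.univ, preimage_univ, preimage_univ,
      ← Measure.add_apply, ← hν]
    exact measure_univ
  have hPprob : IsProbabilityMeasure P := by
    constructor
    have : P.map (Subtype.val : ↥S → (ℝ × ℝ) × Bool) univ = m univ := by rw [hmap_val]
    rwa [Measure.map_apply measurable_subtype_coe MeasurableSet.univ, preimage_univ, hm_univ]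
      at this
  set Y0 : ↥S → ℝ := fun ω => ω.val.1.1 with hY0def
  set Y1 : ↥S → ℝ := fun ω => ω.val.1.2 with hY1def
  set D : ↥S → Bool := fun ω => ω.val.2 with hDdef
  set Y : ↥S → ℝ := fun ω => if D ω then Y1 ω else Y0 ω with hYdef
  have hY0m : Measurable Y0 := (measurable_fst.comp measurable_fst).comp measurable_subtype_coe
  have hY1m : Measurable Y1 := (measurable_snd.comp measurable_fst).comp measurable_subtype_coe
  have hDm : Measurable D := measurable_snd.comp measurable_subtype_coe
  have hYm : Measurable Y := by
    rw [hYdef]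
    exact Measurable.ite (hDm (measurableSet_singleton true)) hY1m hY0m
  refine ⟨↥S, inferInstance, P, hPprob, Y, D, Y0, Y1, hYm, hDm, hY0m, hY1m, ?_, ?_,
    fun ω => rfl, ?_, ?_⟩
  · -- law of (Y, D) is μ
    set g : (ℝ × ℝ) × Bool → ℝ × Bool := fun q => (if q.2 then q.1.2 else q.1.1, q.2) with hgdef
    have hgm : Measurable g := by
      refine Measurable.prodMk ?_ measurable_snd
      exact Measurable.ite (measurable_snd (measurableSet_singleton true))
        (measurable_snd.comp measurable_fst) (measurable_fst.comp measurable_fst)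
    have hcomp : (fun ω => (Y ω, D ω)) = g ∘ (Subtype.val : ↥S → (ℝ × ℝ) × Bool) := rfl
    rw [hcomp, ← Measure.map_map hgm measurable_subtype_coe, hmap_val, hmdef,
      Measure.map_add _ _ hgm, Measure.map_map hgm hjf, Measure.map_map hgm hjt]
    have e0 : g ∘ (fun p : ℝ × ℝ => (p, false)) = (fun y => (y, false)) ∘ Prod.fst := rfl
    have e1 : g ∘ (fun p : ℝ × ℝ => (p, true)) = (fun y => (y, true)) ∘ Prod.snd := rfl
    have hmf : Measurable fun y : ℝ => (y, false) := measurable_id.prodMk measurable_const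
    have hmt : Measurable fun y : ℝ => (y, true) := measurable_id.prodMk measurable_const
    rw [e0, e1, ← Measure.map_map hmf measurable_fst, ← Measure.map_map hmt measurable_snd,
      hm0, hm1]
    exact mu_eq_slices μ
  · -- law of (Y0, Y1) is ν
    have hcomp : (fun ω => (Y0 ω, Y1 ω)) =
        Prod.fst ∘ (Subtype.val : ↥S → (ℝ × ℝ) × Bool) := by
      funext ω
      simp [hY0def, hY1def]
    rw [hcomp, ← Measure.map_map measurable_fst measurable_subtype_coe, hmap_val, hmdef,
      Measure.map_add _ _ measurable_fst, Measure.map_map measurable_fst hjf,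
      Measure.map_map measurable_fst hjt]
    have e0 : Prod.fst ∘ (fun p : ℝ × ℝ => (p, false)) = id := rfl
    have e1 : Prod.fst ∘ (fun p : ℝ × ℝ => (p, true)) = id := rfl
    rw [e0, e1, Measure.map_id, Measure.map_id, hν]
  · -- selection: Y1 > Y0 → D = true
    intro ω hgt
    rcases ω.property with hmem | hmem
    · exfalso
      have hle : ω.val.1.2 ≤ ω.val.1.1 := hmem.1
      simp only [hY0def, hY1def, gt_iff_lt] at hgt
      linarith
    · exact hmem.2
  · -- selection: Y0 > Y1 → D = false
    intro ω hgt
    rcases ω.property with hmem | hmem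
    · exact hmem.2
    · exfalso
      have hle : ω.val.1.1 ≤ ω.val.1.2 := hmem.1
      simp only [hY0def, hY1def, gt_iff_lt] at hgt
      linarith


end RoyAux

open RoyAux

/-- Artstein-type characterization of the empirical content of the continuous Roy model:
`ν` (a candidate law of `(Y0, Y1)`) is compatible with the observable law `μ` of `(Y, D)`
(with `D = true` coding Sector 1) if and only if the lower/upper-set inequalities hold
for every Borel set `A ⊆ ℝ²`. -/
theorem roy_artstein_characterization
    (μ : Measure (ℝ × Bool)) [IsProbabilityMeasure μ]
    (ν : Measure (ℝ × ℝ)) [IsProbabilityMeasure ν] :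
    (∃ (Ω : Type) (_ : MeasurableSpace Ω) (P : Measure Ω),
      IsProbabilityMeasure P ∧
      ∃ (Y : Ω → ℝ) (D : Ω → Bool) (Y0 Y1 : Ω → ℝ),
        Measurable Y ∧ Measurable D ∧ Measurable Y0 ∧ Measurable Y1 ∧
        P.map (fun ω => (Y ω, D ω)) = μ ∧
        P.map (fun ω => (Y0 ω, Y1 ω)) = ν ∧
        (∀ ω, Y ω = if D ω then Y1 ω else Y0 ω) ∧
        (∀ ω, Y1 ω > Y0 ω → D ω = true) ∧
        (∀ ω, Y0 ω > Y1 ω → D ω = false)) ↔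
    (∀ A : Set (ℝ × ℝ), MeasurableSet A →
      μ ({y : ℝ | ∀ x ≤ y, (y, x) ∈ A} ×ˢ ({false} : Set Bool)) +
        μ ({y : ℝ | ∀ x ≤ y, (x, y) ∈ A} ×ˢ ({true} : Set Bool)) ≤ ν A ∧
      ν A ≤ μ ({y : ℝ | ∃ x ≤ y, (y, x) ∈ A} ×ˢ ({false} : Set Bool)) +
        μ ({y : ℝ | ∃ x ≤ y, (x, y) ∈ A} ×ˢ ({true} : Set Bool))) := by
  constructor
  · rintro ⟨Ω, mΩ, P, hP, Y, D, Y0, Y1, hY, hD, hY0, hY1, hmap1, hmap2, hsel, h10, h01⟩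
    obtain ⟨ν0, ν1, hν, h0, h1, hm0, hm1⟩ :=
      decomp_of_exists P μ ν Y D Y0 Y1 hY hD hY0 hY1 hmap1 hmap2 hsel h10 h01
    haveI : IsFiniteMeasure ν0 := by
      constructor
      have hle : ν0 Set.univ ≤ ν Set.univ := by
        rw [hν, Measure.add_apply]
        exact le_self_add
      exact hle.trans_lt (measure_lt_top _ _)
    haveI : IsFiniteMeasure ν1 := by
      constructor
      have hle : ν1 Set.univ ≤ ν Set.univ := by
        rw [hν, Measure.add_apply]
        exact le_add_self
      exact hle.trans_lt (measure_lt_top _ _)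
    intro A hA
    have hsum : ν A = ν0 A + ν1 A := by rw [hν, Measure.add_apply]
    constructor
    · rw [mF_outer, mT_outer, hsum]
      exact add_le_add (lower_bound_piece h0 hm0 hA) (lower_bound_piece1 h1 hm1 hA)
    · rw [mF_outer, mT_outer, hsum]
      exact add_le_add (upper_bound_piece h0 hm0) (upper_bound_piece1 h1 hm1)
  · intro h
    obtain ⟨ν0, ν1, hν, h0, h1, hm0, hm1⟩ := decomp_of_ineq μ ν h
    exact exists_of_decomp μ ν ν0 ν1 hν h0 h1 hm0 hm1
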